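/- Let T ∈ (0,∞), d ∈ ℕ, let O ⊆ ℝ^d be an open set, let G : (0,T) × O × ℝ × ℝ^d × S_d → ℝ be degenerate elliptic, and let u : [0,T] × O → ℝ be upper semicontinuous such that the restriction of u to (0,T) × O is a viscosity subsolution of ∂u/∂t (t,x) − G(t,x, u(t,x), (∇_x u)(t,x), (Hess_x u)(t,x)) = 0. Assume that lim_{n→∞} [ sup { u(t,x) : t ∈ [0,T], x ∈ O with dist(x, ℝ^d∖O) < 1/n or ‖x‖ > n } ] ≤ 0, that G(t,x,r,0,0) ≤ 0 for all (t,x,r) ∈ (0,T) × O × (0,∞), and that u(0,x) ≤ 0 for all x ∈ O. Then u(t,x) ≤ 0 for all (t,x) ∈ [0,T) × O. -/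

import Mathlib

open Real

/-- The time derivative `∂φ/∂t` of a function `φ : ℝ × ℝ^d → ℝ` of time and space. -/
noncomputable def timeDeriv {d : ℕ} (φ : ℝ × EuclideanSpace ℝ (Fin d) → ℝ)
    (y : ℝ × EuclideanSpace ℝ (Fin d)) : ℝ :=
  fderiv ℝ φ y (1, 0)

/-- The spatial gradient `∇ₓφ` of a function `φ : ℝ × ℝ^d → ℝ` of time and space. -/
noncomputable def spaceGrad {d : ℕ} (φ : ℝ × EuclideanSpace ℝ (Fin d) → ℝ)
    (y : ℝ × EuclideanSpace ℝ (Fin d)) : EuclideanSpace ℝ (Fin d) :=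
  WithLp.toLp 2 (fun i => fderiv ℝ φ y (0, EuclideanSpace.single i 1))

/-- The spatial Hessian `Hessₓφ` of a function `φ : ℝ × ℝ^d → ℝ` of time and space. -/
noncomputable def spaceHess {d : ℕ} (φ : ℝ × EuclideanSpace ℝ (Fin d) → ℝ)
    (y : ℝ × EuclideanSpace ℝ (Fin d)) : Matrix (Fin d) (Fin d) ℝ :=
  Matrix.of fun i j =>
    fderiv ℝ (fun z => fderiv ℝ φ z (0, EuclideanSpace.single j 1)) y
      (0, EuclideanSpace.single i 1)

/-- `G : (0,T) × O × ℝ × ℝ^d × S_d → ℝ` is degenerate elliptic if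
`G(t,x,r,p,A) ≤ G(t,x,r,p,B)` whenever `A ≤ B` (i.e. `B - A` is positive
semidefinite). -/
def ParabolicDegenerateElliptic {d : ℕ} (T : ℝ) (O : Set (EuclideanSpace ℝ (Fin d)))
    (G : ℝ → EuclideanSpace ℝ (Fin d) → ℝ → EuclideanSpace ℝ (Fin d) →
      Matrix (Fin d) (Fin d) ℝ → ℝ) : Prop :=
  ∀ t ∈ Set.Ioo 0 T, ∀ x ∈ O, ∀ (r : ℝ) (p : EuclideanSpace ℝ (Fin d))
    (A B : Matrix (Fin d) (Fin d) ℝ),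
    A.IsSymm → B.IsSymm → (B - A).PosSemidef → G t x r p A ≤ G t x r p B

/-- `u : (0,T) × O → ℝ` is a viscosity subsolution of
`∂u/∂t − G(t, x, u, ∇ₓu, Hessₓu) = 0`, i.e. a viscosity subsolution of `F = 0` on the
open set `(0,T) × O ⊆ ℝ^{1+d}`, where `F((t,x), r, (q,p), M) = q − G(t,x,r,p,A)` and
only the time component `q` of the gradient variable, the space components `p`, and
the spatial block `A` of the Hessian variable `M` enter `F`: `u` is upper
semicontinuous on `(0,T) × O` and for every `C²` test function `φ` on `(0,T) × O`
with `φ(y) = u(y)` and `φ ≥ u`, `∂φ/∂t(y) − G(y, φ(y), ∇ₓφ(y), Hessₓφ(y)) ≤ 0`. -/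
def IsParabolicViscositySubsolution {d : ℕ} (T : ℝ)
    (O : Set (EuclideanSpace ℝ (Fin d)))
    (G : ℝ → EuclideanSpace ℝ (Fin d) → ℝ → EuclideanSpace ℝ (Fin d) →
      Matrix (Fin d) (Fin d) ℝ → ℝ)
    (u : ℝ → EuclideanSpace ℝ (Fin d) → ℝ) : Prop :=
  UpperSemicontinuousOn (fun y : ℝ × EuclideanSpace ℝ (Fin d) => u y.1 y.2)
      (Set.Ioo 0 T ×ˢ O) ∧
    ∀ φ : ℝ × EuclideanSpace ℝ (Fin d) → ℝ, ContDiffOn ℝ 2 φ (Set.Ioo 0 T ×ˢ O) →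
      ∀ y ∈ Set.Ioo 0 T ×ˢ O, φ y = u y.1 y.2 →
        (∀ z ∈ Set.Ioo 0 T ×ˢ O, u z.1 z.2 ≤ φ z) →
          timeDeriv φ y - G y.1 y.2 (φ y) (spaceGrad φ y) (spaceHess φ y) ≤ 0

/-- `u : (0,T) × O → ℝ` is a viscosity supersolution of
`∂u/∂t − G(t, x, u, ∇ₓu, Hessₓu) = 0`; see `IsParabolicViscositySubsolution`. -/
def IsParabolicViscositySupersolution {d : ℕ} (T : ℝ)
    (O : Set (EuclideanSpace ℝ (Fin d)))
    (G : ℝ → EuclideanSpace ℝ (Fin d) → ℝ → EuclideanSpace ℝ (Fin d) →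
      Matrix (Fin d) (Fin d) ℝ → ℝ)
    (u : ℝ → EuclideanSpace ℝ (Fin d) → ℝ) : Prop :=
  LowerSemicontinuousOn (fun y : ℝ × EuclideanSpace ℝ (Fin d) => u y.1 y.2)
      (Set.Ioo 0 T ×ˢ O) ∧
    ∀ φ : ℝ × EuclideanSpace ℝ (Fin d) → ℝ, ContDiffOn ℝ 2 φ (Set.Ioo 0 T ×ˢ O) →
      ∀ y ∈ Set.Ioo 0 T ×ˢ O, φ y = u y.1 y.2 →
        (∀ z ∈ Set.Ioo 0 T ×ˢ O, φ z ≤ u z.1 z.2) →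
          0 ≤ timeDeriv φ y - G y.1 y.2 (φ y) (spaceGrad φ y) (spaceHess φ y)

/-- `u : (0,T) × O → ℝ` is a viscosity solution of
`∂u/∂t − G(t, x, u, ∇ₓu, Hessₓu) = 0` if it is both a viscosity subsolution and a
viscosity supersolution; see `IsParabolicViscositySubsolution`. -/
def IsParabolicViscositySolution {d : ℕ} (T : ℝ)
    (O : Set (EuclideanSpace ℝ (Fin d)))
    (G : ℝ → EuclideanSpace ℝ (Fin d) → ℝ → EuclideanSpace ℝ (Fin d) →
      Matrix (Fin d) (Fin d) ℝ → ℝ)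
    (u : ℝ → EuclideanSpace ℝ (Fin d) → ℝ) : Prop :=
  IsParabolicViscositySubsolution T O G u ∧ IsParabolicViscositySupersolution T O G u

open scoped ENNReal

open Topology Filter

/-- USC functions attain their max on nonempty compact sets. -/
theorem usc_exists_max {X : Type*} [TopologicalSpace X] {s : Set X} (hs : IsCompact s)
    (hne : s.Nonempty) {f : X → ℝ} (hf : UpperSemicontinuousOn f s) :
    ∃ z ∈ s, ∀ w ∈ s, f w ≤ f z := by
  by_contra h
  push_neg at h
  choose w hws hfw using h
  have key : ∀ x (hx : x ∈ s), ∃ U ∈ 𝓝 x, ∀ y ∈ U, y ∈ s → f y < f (w x hx) := by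
    intro x hx
    have h2 := hf x hx (f (w x hx)) (hfw x hx)
    rw [eventually_nhdsWithin_iff] at h2
    exact ⟨_, h2, fun y hy hys => hy hys⟩
  choose U hU hUlt using key
  obtain ⟨t, hcov⟩ := hs.elim_nhds_subcover' U (fun x hx => hU x hx)
  have htne : t.Nonempty := by
    obtain ⟨x₀, hx₀⟩ := hne
    obtain ⟨i, hit, -⟩ := Set.mem_iUnion₂.1 (hcov hx₀)
    exact ⟨i, hit⟩
  obtain ⟨b, hbt, hbmax⟩ := t.exists_max_image (fun x : s => f (w x x.2)) htne
  have hwb : w b b.2 ∈ s := hws b b.2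
  obtain ⟨i, hit, hiU⟩ := Set.mem_iUnion₂.1 (hcov hwb)
  have h1 : f (w b b.2) < f (w i i.2) := hUlt i i.2 _ hiU hwb
  exact absurd (hbmax i hit) (not_le.2 h1)

section Phi

variable {d : ℕ} (T δ c₀ : ℝ)

private noncomputable def phiF : ℝ × EuclideanSpace ℝ (Fin d) → ℝ :=
  fun w => c₀ + δ * (T - w.1)⁻¹

theorem phi_hasFDerivAt (z : ℝ × EuclideanSpace ℝ (Fin d)) (hz : z.1 ≠ T) :
    HasFDerivAt (phiF T δ c₀)
      (((1 : ℝ →L[ℝ] ℝ).smulRight (δ / (T - z.1) ^ 2)).comp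
        (ContinuousLinearMap.fst ℝ ℝ (EuclideanSpace ℝ (Fin d)))) z := by
  have hne : T - z.1 ≠ 0 := sub_ne_zero.2 (Ne.symm hz)
  have h1 : HasDerivAt (fun t : ℝ => T - t) (-1) z.1 := (hasDerivAt_id z.1).const_sub T
  have h2 := (h1.inv hne).const_mul δ
  have h3 := h2.const_add c₀
  have heq : δ * (- -1 / (T - z.1) ^ 2) = δ / (T - z.1) ^ 2 := by ring
  rw [heq] at h3
  exact h3.hasFDerivAt.comp z hasFDerivAt_fst

theorem phi_fderiv_apply (z : ℝ × EuclideanSpace ℝ (Fin d)) (hz : z.1 ≠ T)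
    (q : ℝ) (p : EuclideanSpace ℝ (Fin d)) :
    fderiv ℝ (phiF T δ c₀) z (q, p) = q * (δ / (T - z.1) ^ 2) := by
  rw [(phi_hasFDerivAt T δ c₀ z hz).fderiv]
  simp [mul_comm]

theorem phi_timeDeriv (y : ℝ × EuclideanSpace ℝ (Fin d)) (hy : y.1 ≠ T) :
    timeDeriv (phiF T δ c₀) y = δ / (T - y.1) ^ 2 := by
  rw [timeDeriv, phi_fderiv_apply T δ c₀ y hy, one_mul]

theorem phi_spaceGrad (y : ℝ × EuclideanSpace ℝ (Fin d)) (hy : y.1 ≠ T) :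
    spaceGrad (phiF T δ c₀) y = 0 := by
  ext i
  rw [spaceGrad, PiLp.toLp_apply, phi_fderiv_apply T δ c₀ y hy, zero_mul]
  rfl

theorem phi_spaceHess (y : ℝ × EuclideanSpace ℝ (Fin d)) (hy : y.1 ≠ T) :
    spaceHess (phiF T δ c₀) y = 0 := by
  have hopen : IsOpen {z : ℝ × EuclideanSpace ℝ (Fin d) | z.1 ≠ T} :=
    isOpen_ne.preimage continuous_fst
  ext i j
  rw [spaceHess]
  have hev : (fun z : ℝ × EuclideanSpace ℝ (Fin d) =>
      fderiv ℝ (phiF T δ c₀) z (0, EuclideanSpace.single j 1)) =ᶠ[𝓝 y]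
      fun _ => (0 : ℝ) := by
    filter_upwards [hopen.mem_nhds hy] with z hz
    rw [phi_fderiv_apply T δ c₀ z hz, zero_mul]
  have h0 : fderiv ℝ (fun z : ℝ × EuclideanSpace ℝ (Fin d) =>
      fderiv ℝ (phiF T δ c₀) z (0, EuclideanSpace.single j 1)) y =
      fderiv ℝ (fun _ : ℝ × EuclideanSpace ℝ (Fin d) => (0 : ℝ)) y := hev.fderiv_eq
  simp only [Matrix.of_apply, h0, fderiv_const]
  simp

theorem phi_contDiffOn {s : Set (ℝ × EuclideanSpace ℝ (Fin d))}
    (hs : ∀ z ∈ s, z.1 ≠ T) : ContDiffOn ℝ 2 (phiF T δ c₀) s := by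
  apply ContDiffOn.add contDiffOn_const
  apply ContDiffOn.mul contDiffOn_const
  exact (contDiffOn_const.sub contDiff_fst.contDiffOn).inv
    (fun z hz => sub_ne_zero.2 (Ne.symm (hs z hz)))

end Phi

/-- a domination result for viscosity subsolutions: let `u` be upper
semicontinuous on `[0,T] × O` whose restriction to `(0,T) × O` is a viscosity
subsolution of `∂u/∂t − G(t,x,u,∇ₓu,Hessₓu) = 0`, where `G` is degenerate elliptic.
If `lim_{n→∞} sup { u(t,x) : t ∈ [0,T], x ∈ O near ∂O or with ‖x‖ > n } ≤ 0`,
`G(t,x,r,0,0) ≤ 0` for all `r > 0`, and `u(0,·) ≤ 0` on `O`, then `u ≤ 0` on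
`[0,T) × O`. -/
theorem viscosity_subsolution_domination
    {d : ℕ} (hd : 0 < d) (T : ℝ) (hT : 0 < T)
    (O : Set (EuclideanSpace ℝ (Fin d))) (hO : IsOpen O)
    (G : ℝ → EuclideanSpace ℝ (Fin d) → ℝ → EuclideanSpace ℝ (Fin d) →
      Matrix (Fin d) (Fin d) ℝ → ℝ)
    (hG : ParabolicDegenerateElliptic T O G)
    (u : ℝ → EuclideanSpace ℝ (Fin d) → ℝ)
    (husc : UpperSemicontinuousOn (fun y : ℝ × EuclideanSpace ℝ (Fin d) => u y.1 y.2)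
      (Set.Icc 0 T ×ˢ O))
    (hsub : IsParabolicViscositySubsolution T O G u)
    (hboundary : ∀ ε : ℝ, 0 < ε → ∃ n : ℕ, 1 ≤ n ∧ ∀ t ∈ Set.Icc 0 T, ∀ x ∈ O,
      (EMetric.infEdist x Oᶜ < (n : ℝ≥0∞)⁻¹ ∨ (n : ℝ) < ‖x‖) → u t x ≤ ε)
    (hG0 : ∀ t ∈ Set.Ioo 0 T, ∀ x ∈ O, ∀ r : ℝ, 0 < r → G t x r 0 0 ≤ 0)
    (hinit : ∀ x ∈ O, u 0 x ≤ 0) :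
    ∀ t ∈ Set.Ico 0 T, ∀ x ∈ O, u t x ≤ 0 := by
  intro t₀ ht₀ x₀ hx₀
  by_contra hpos
  push_neg at hpos
  set c := u t₀ x₀ with hc
  obtain ⟨n, hn1, hbd⟩ := hboundary (c / 2) (by positivity)
  -- the compact core of O
  set K : Set (EuclideanSpace ℝ (Fin d)) :=
    {x | ((2 * n : ℕ) : ℝ≥0∞)⁻¹ ≤ EMetric.infEdist x Oᶜ} ∩ Metric.closedBall 0 (n + 1)
    with hKdef
  have h2n : ((2 * n : ℕ) : ℝ≥0∞)⁻¹ < ((n : ℕ) : ℝ≥0∞)⁻¹ := by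
    rw [ENNReal.inv_lt_inv]
    exact_mod_cast (by omega : n < 2 * n)
  have hKO : K ⊆ O := by
    intro x hx
    have h1 : (0 : ℝ≥0∞) < EMetric.infEdist x Oᶜ :=
      lt_of_lt_of_le (ENNReal.inv_pos.mpr (ENNReal.natCast_ne_top _)) hx.1
    have h2 := EMetric.infEdist_pos_iff_notMem_closure.mp h1
    rw [hO.isClosed_compl.closure_eq] at h2
    simpa using h2
  have hKcl : IsClosed {x : EuclideanSpace ℝ (Fin d) |
      ((2 * n : ℕ) : ℝ≥0∞)⁻¹ ≤ EMetric.infEdist x Oᶜ} :=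
    isClosed_le continuous_const EMetric.continuous_infEdist
  have hKcompact : IsCompact K :=
    ((isCompact_closedBall 0 (n + 1)).inter_left hKcl)
  -- x₀ is in the core
  have hnbd_x₀ : ¬(EMetric.infEdist x₀ Oᶜ < (n : ℝ≥0∞)⁻¹ ∨ (n : ℝ) < ‖x₀‖) := by
    intro hb
    have := hbd t₀ ⟨ht₀.1, ht₀.2.le⟩ x₀ hx₀ hb
    simp only [← hc] at this
    linarith
  push_neg at hnbd_x₀
  have hx₀K : x₀ ∈ K := by
    constructor
    · exact le_trans h2n.le hnbd_x₀.1
    · rw [Metric.mem_closedBall, dist_zero_right]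
      linarith [hnbd_x₀.2]
  -- the max M of u on [0,T] × K
  have hsubMS : Set.Icc (0:ℝ) T ×ˢ K ⊆ Set.Icc 0 T ×ˢ O :=
    Set.prod_mono subset_rfl hKO
  obtain ⟨zM, hzM, hzMmax⟩ := usc_exists_max (isCompact_Icc.prod hKcompact)
    ⟨(t₀, x₀), ⟨⟨ht₀.1, ht₀.2.le⟩, hx₀K⟩⟩ (husc.mono hsubMS)
  set M := u zM.1 zM.2 with hMdef
  have hMc : c ≤ M := hzMmax (t₀, x₀) ⟨⟨ht₀.1, ht₀.2.le⟩, hx₀K⟩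
  have hM : 0 < M := lt_of_lt_of_le hpos hMc
  have hTt₀ : 0 < T - t₀ := sub_pos.2 ht₀.2
  set δ := min (c / 2) M * (T - t₀) / 2 with hδdef
  have hmin : 0 < min (c / 2) M := lt_min (by positivity) hM
  have hδ : 0 < δ := by
    rw [hδdef]; positivity
  set T₁ := T - δ / M with hT₁def
  have hT₁T : T₁ < T := by
    rw [hT₁def]
    have : 0 < δ / M := div_pos hδ hM
    linarith
  have ht₀T₁ : t₀ ≤ T₁ := by
    have h1 : δ ≤ M * (T - t₀) / 2 := by
      rw [hδdef]
      have := min_le_right (c / 2) M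
      nlinarith
    have h2 : δ / M ≤ (T - t₀) / 2 := by
      rw [div_le_iff₀ hM]
      nlinarith
    rw [hT₁def]
    linarith
  have hδc : δ / (T - t₀) < c / 2 := by
    rw [div_lt_iff₀ hTt₀]
    have h1 : min (c / 2) M ≤ c / 2 := min_le_left _ _
    nlinarith
  -- the maximum of v = u - δ/(T-t) on [0,T₁] × K
  set v : ℝ × EuclideanSpace ℝ (Fin d) → ℝ :=
    fun z => u z.1 z.2 + -(δ * (T - z.1)⁻¹) with hvdef
  set S := Set.Icc (0:ℝ) T₁ ×ˢ K with hSdef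
  have hSsub : S ⊆ Set.Icc 0 T ×ˢ O :=
    Set.prod_mono (Set.Icc_subset_Icc_right hT₁T.le) hKO
  have hSne : ∀ z ∈ S, T - z.1 ≠ 0 := by
    rintro z ⟨hz1, -⟩
    have : z.1 < T := lt_of_le_of_lt hz1.2 hT₁T
    exact sub_ne_zero.2 (Ne.symm this.ne)
  have hvUSC : UpperSemicontinuousOn v S := by
    apply UpperSemicontinuousOn.add (husc.mono hSsub)
    apply ContinuousOn.upperSemicontinuousOn
    exact (continuousOn_const.mul
      ((continuousOn_const.sub continuous_fst.continuousOn).inv₀ hSne)).neg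
  obtain ⟨y, hyS, hymax⟩ := usc_exists_max (isCompact_Icc.prod hKcompact)
    ⟨(t₀, x₀), ⟨⟨ht₀.1, ht₀T₁⟩, hx₀K⟩⟩ hvUSC
  have hyT : y.1 < T := lt_of_le_of_lt hyS.1.2 hT₁T
  have hyTne : T - y.1 ≠ 0 := sub_ne_zero.2 (Ne.symm hyT.ne)
  have hvy_half : c / 2 < v y := by
    have h1 := hymax (t₀, x₀) ⟨⟨ht₀.1, ht₀T₁⟩, hx₀K⟩
    have h2 : v (t₀, x₀) = c - δ / (T - t₀) := by
      rw [hvdef]; simp [div_eq_mul_inv, hc]; ring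
    rw [h2] at h1
    linarith
  have hy0 : 0 < v y := lt_trans (half_pos hpos) hvy_half
  -- y.1 > 0
  have hyt_pos : 0 < y.1 := by
    rcases (lt_or_eq_of_le hyS.1.1) with h | h
    · exact h
    · exfalso
      have hy2O : y.2 ∈ O := hKO hyS.2
      have h1 : u y.1 y.2 ≤ 0 := by rw [← h]; exact hinit y.2 hy2O
      have h2 : 0 < δ * (T - y.1)⁻¹ := by
        apply mul_pos hδ
        rw [inv_pos, ← h]
        linarith
      have : v y < 0 := by rw [hvdef]; dsimp only; linarith
      linarith
  -- y.2 is in the interior region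
  have hvley : v y ≤ u y.1 y.2 := by
    have h2 : 0 ≤ δ * (T - y.1)⁻¹ := by
      apply mul_nonneg hδ.le
      rw [inv_nonneg]
      linarith
    rw [hvdef]; dsimp only; linarith
  have hyU : ((2 * n : ℕ) : ℝ≥0∞)⁻¹ < EMetric.infEdist y.2 Oᶜ ∧ ‖y.2‖ < n + 1 := by
    by_contra hcon
    have hb : EMetric.infEdist y.2 Oᶜ < (n : ℝ≥0∞)⁻¹ ∨ (n : ℝ) < ‖y.2‖ := by
      push_neg at hcon
      by_cases h : ((2 * n : ℕ) : ℝ≥0∞)⁻¹ < EMetric.infEdist y.2 Oᶜ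
      · right
        have := hcon h
        have hn0 : (0:ℝ) ≤ (n:ℝ) := Nat.cast_nonneg n
        linarith
      · left
        exact lt_of_le_of_lt (not_lt.1 h) (by exact_mod_cast h2n)
    have h1 := hbd y.1 ⟨hyS.1.1, (lt_of_le_of_lt hyS.1.2 hT₁T).le⟩ y.2 (hKO hyS.2) hb
    exact absurd (lt_of_lt_of_le hvy_half hvley) (not_lt.2 h1)
  -- apply the subsolution property with test function φ
  set c₀ := v y with hc₀def
  have hφy : phiF T δ c₀ y = u y.1 y.2 := by
    simp only [phiF, hc₀def, hvdef]; ring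
  have hφge : ∀ z ∈ Set.Ioo 0 T ×ˢ O, u z.1 z.2 ≤ phiF T δ c₀ z := by
    rintro z ⟨hz1, hz2⟩
    have hzT : 0 < T - z.1 := sub_pos.2 hz1.2
    have hdpos : 0 ≤ δ * (T - z.1)⁻¹ :=
      mul_nonneg hδ.le (inv_nonneg.2 hzT.le)
    simp only [phiF]
    by_cases hb : EMetric.infEdist z.2 Oᶜ < (n : ℝ≥0∞)⁻¹ ∨ (n : ℝ) < ‖z.2‖
    · have := hbd z.1 ⟨hz1.1.le, hz1.2.le⟩ z.2 hz2 hb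
      linarith [hvy_half]
    · push_neg at hb
      have hzK : z.2 ∈ K := by
        constructor
        · exact le_trans h2n.le hb.1
        · rw [Metric.mem_closedBall, dist_zero_right]
          linarith [hb.2]
      by_cases ht : z.1 ≤ T₁
      · have h1 := hymax z ⟨⟨hz1.1.le, ht⟩, hzK⟩
        simp only [hvdef] at h1
        linarith
      · push_neg at ht
        have hMz := hzMmax z ⟨⟨hz1.1.le, hz1.2.le⟩, hzK⟩
        have h1 : T - z.1 < δ / M := by
          rw [hT₁def] at ht
          linarith
        have h3 : M ≤ δ * (T - z.1)⁻¹ := by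
          rw [← div_eq_mul_inv, le_div_iff₀ hzT]
          have h4 := mul_lt_mul_of_pos_left h1 hM
          rw [mul_div_cancel₀ δ hM.ne'] at h4
          linarith
        linarith [hy0]
  have hyIoo : y ∈ Set.Ioo 0 T ×ˢ O := ⟨⟨hyt_pos, hyT⟩, hKO hyS.2⟩
  have happ := hsub.2 (phiF T δ c₀) (phi_contDiffOn T δ c₀
    (fun z hz => ne_of_lt hz.1.2)) y hyIoo hφy hφge
  rw [phi_timeDeriv T δ c₀ y hyT.ne, phi_spaceGrad T δ c₀ y hyT.ne,
    phi_spaceHess T δ c₀ y hyT.ne] at happ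
  have hupos : 0 < u y.1 y.2 := lt_of_lt_of_le hy0 hvley
  have hGle : G y.1 y.2 (phiF T δ c₀ y) 0 0 ≤ 0 := by
    rw [hφy]
    exact hG0 y.1 hyIoo.1 y.2 hyIoo.2 _ hupos
  have hpos2 : 0 < δ / (T - y.1) ^ 2 := by positivity
  linarith
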